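/- The total number of right-to-left minima summed over all flattened permutations of {1,...,n} equals the Bell number B(n) for appropriate indexing; specifically, Σ_{π flattened of length n} rlm(π) = Σ_{k≥1} k·S(n−1,k−1) = B(n−1) + Σ_{k≥0} k·S(n−1,k) for n ≥ 1. -/

import Mathlib

open Finset

/-- `ℓ` is a valley of `π`: `2 ≤ ℓ ≤ n-1` (1-based) with `π(ℓ-1) > π(ℓ) < π(ℓ+1)`. -/
def IsValley {n : ℕ} (π : Equiv.Perm (Fin n)) (ℓ : Fin n) : Prop :=
  1 ≤ ℓ.val ∧ ∃ h2 : ℓ.val + 1 < n,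
    π ⟨ℓ.val - 1, lt_of_le_of_lt (Nat.sub_le _ _) ℓ.isLt⟩ > π ℓ ∧ π ℓ < π ⟨ℓ.val + 1, h2⟩

/-- number of valleys of `π` -/
noncomputable def valCount {n : ℕ} (π : Equiv.Perm (Fin n)) : ℕ :=
  {ℓ : Fin n | IsValley π ℓ}.ncard

/-- `ℓ` is a peak of `π`. -/
def IsPeak {n : ℕ} (π : Equiv.Perm (Fin n)) (ℓ : Fin n) : Prop :=
  1 ≤ ℓ.val ∧ ∃ h2 : ℓ.val + 1 < n,
    π ⟨ℓ.val - 1, lt_of_le_of_lt (Nat.sub_le _ _) ℓ.isLt⟩ < π ℓ ∧ π ℓ > π ⟨ℓ.val + 1, h2⟩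

/-- number of peaks of `π` -/
noncomputable def peakCount {n : ℕ} (π : Equiv.Perm (Fin n)) : ℕ :=
  {ℓ : Fin n | IsPeak π ℓ}.ncard

/-- number of descents of `π` -/
noncomputable def desCount {n : ℕ} (π : Equiv.Perm (Fin n)) : ℕ :=
  {ℓ : Fin n | ∃ h : ℓ.val + 1 < n, π ⟨ℓ.val + 1, h⟩ < π ℓ}.ncard

/-- `π` is increasing: the values at its valleys, from left to right, strictly increase. -/
def Increasing {n : ℕ} (π : Equiv.Perm (Fin n)) : Prop :=
  ∀ i j : Fin n, IsValley π i → IsValley π j → i < j → π i < π j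

/-- `ℓ` is the first position of a (maximal increasing) run of `π`. -/
def IsRunStart {n : ℕ} (π : Equiv.Perm (Fin n)) (ℓ : Fin n) : Prop :=
  ℓ.val = 0 ∨ π ⟨ℓ.val - 1, lt_of_le_of_lt (Nat.sub_le _ _) ℓ.isLt⟩ > π ℓ

/-- number of (maximal increasing) runs of `π` -/
noncomputable def runCount {n : ℕ} (π : Equiv.Perm (Fin n)) : ℕ :=
  {ℓ : Fin n | IsRunStart π ℓ}.ncard

/-- `π` is flattened: the first entries of its runs, from left to right, increase. -/
def Flattened {n : ℕ} (π : Equiv.Perm (Fin n)) : Prop :=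
  ∀ i j : Fin n, IsRunStart π i → IsRunStart π j → i < j → π i < π j

/-- `π i` is a right-to-left minimum of `π`. -/
def IsRLMin {n : ℕ} (π : Equiv.Perm (Fin n)) (i : Fin n) : Prop :=
  ∀ j : Fin n, i < j → π i < π j

/-- number of right-to-left minima of `π` -/
noncomputable def rlmCount {n : ℕ} (π : Equiv.Perm (Fin n)) : ℕ :=
  {i : Fin n | IsRLMin π i}.ncard

/-- Stirling numbers of the second kind. -/
def stirling2 : ℕ → ℕ → ℕ
  | 0, 0 => 1
  | 0, _+1 => 0
  | _+1, 0 => 0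
  | n+1, k+1 => (k+1) * stirling2 n (k+1) + stirling2 n k

/-- Bell number: the number of set partitions of an `m`-element set. -/
noncomputable def bell (m : ℕ) : ℕ :=
  Nat.card (Finpartition (Finset.univ : Finset (Fin m)))

namespace FlatAux

/-- descent starts of a list, where `p` is the previous element -/
def ds (p : ℕ) : List ℕ → List ℕ
  | [] => []
  | b :: l => if b < p then b :: ds b l else ds b l

/-- run starts of a list -/
def rs : List ℕ → List ℕ
  | [] => []
  | a :: l => a :: ds a l

def FlatL (l : List ℕ) : Prop := (rs l).Pairwise (· < ·)

instance : DecidablePred FlatL := fun l => by unfold FlatL; infer_instance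

def rlmL : List ℕ → ℕ
  | [] => 0
  | a :: l => rlmL l + (if ∀ b ∈ l, a < b then 1 else 0)

lemma ds_sublist (p : ℕ) (l : List ℕ) : (ds p l).Sublist l := by
  induction l generalizing p with
  | nil => simp [ds]
  | cons b l ih =>
    rw [ds]
    split
    · exact (ih b).cons₂ b
    · exact (ih b).cons b

lemma ds_append (p : ℕ) (l₁ l₂ : List ℕ) :
    ds p (l₁ ++ l₂) = ds p l₁ ++ ds (l₁.getLastD p) l₂ := by
  induction l₁ generalizing p with
  | nil => simp [ds]
  | cons b l ih =>
    rw [List.cons_append, ds, ds, List.getLastD_cons]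
    split
    · rw [List.cons_append, ih]
    · rw [ih]

/-- every element of `l` is bounded below by `p` or by some descent start -/
lemma exists_start_le (p : ℕ) (l : List ℕ) (b : ℕ) (hb : b ∈ l) :
    ∃ s, (s = p ∨ s ∈ ds p l) ∧ s ≤ b := by
  induction l generalizing p with
  | nil => simp at hb
  | cons c l ih =>
    rcases List.mem_cons.1 hb with rfl | hb
    · by_cases h : b < p
      · exact ⟨b, Or.inr (by rw [ds, if_pos h]; exact List.mem_cons_self), le_refl _⟩
      · exact ⟨p, Or.inl rfl, not_lt.1 h⟩
    · obtain ⟨s, hs, hsb⟩ := ih c hb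
      by_cases h : c < p
      · rw [ds, if_pos h]
        rcases hs with rfl | hs
        · exact ⟨s, Or.inr (List.mem_cons_self), hsb⟩
        · exact ⟨s, Or.inr (List.mem_cons_of_mem _ hs), hsb⟩
      · rw [ds, if_neg h]
        rcases hs with rfl | hs
        · exact ⟨p, Or.inl rfl, le_trans (not_lt.1 h) hsb⟩
        · exact ⟨s, Or.inr hs, hsb⟩

lemma getLastD_congr (l : List ℕ) (d d' : ℕ) (h : l ≠ []) :
    l.getLastD d = l.getLastD d' := by
  cases l with
  | nil => exact absurd rfl h
  | cons a l => rw [List.getLastD_cons, List.getLastD_cons]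

/-- the last descent start is at most the last element -/
lemma ds_getLastD_le (l : List ℕ) (p d : ℕ) (h : l ≠ []) :
    (ds p l).getLastD p ≤ l.getLastD d := by
  induction l generalizing p d with
  | nil => exact absurd rfl h
  | cons c l ih =>
    rw [ds, List.getLastD_cons]
    rcases eq_or_ne l [] with rfl | hl
    · simp only [ds]
      split
      · simp
      · simpa using not_lt.1 (by assumption)
    · have hkey : (ds c l).getLastD c ≤ l.getLastD c := ih c c hl
      split
      · rw [List.getLastD_cons]
        exact hkey
      · rcases eq_or_ne (ds c l) [] with hds | hds
        · rw [hds]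
          simp only [hds, List.getLastD] at hkey
          exact le_trans (not_lt.1 (by assumption)) hkey
        · rw [getLastD_congr _ p c hds]
          exact hkey

lemma head_lt_of_flat {a : ℕ} {l : List ℕ} (h : FlatL (a :: l)) (hnd : a ∉ l) :
    ∀ b ∈ l, a < b := by
  intro b hb
  obtain ⟨s, hs, hsb⟩ := exists_start_le a l b hb
  rcases hs with rfl | hs
  · exact lt_of_le_of_ne hsb (fun hab => hnd (hab ▸ hb))
  · have := (List.pairwise_cons.1 h).1 s hs
    exact lt_of_lt_of_le this hsb

end FlatAux

namespace FlatAux2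
open FlatAux

lemma getLastD_append_singleton (u : List ℕ) (n d : ℕ) :
    (u ++ [n]).getLastD d = n := by
  induction u generalizing d with
  | nil => rfl
  | cons a u ih => rw [List.cons_append, List.getLastD_cons]; exact ih a

lemma le_getLastD_of_pairwise {L : List ℕ} : ∀ {c x : ℕ}, (c :: L).Pairwise (· < ·) →
    x ∈ c :: L → x ≤ L.getLastD c := by
  induction L with
  | nil => intro c x _ hx; simp at hx; simp [hx]
  | cons e L ih =>
    intro c x h hx
    rw [List.getLastD_cons]
    rcases List.mem_cons.1 hx with rfl | hx
    · have hce : x < e := (List.pairwise_cons.1 h).1 e (List.mem_cons_self)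
      have : e ≤ L.getLastD e := ih (List.pairwise_cons.1 h).2 (List.mem_cons_self)
      exact le_trans hce.le this
    · exact ih (List.pairwise_cons.1 h).2 hx

lemma start_rlm (a : ℕ) (u' : List ℕ) {y : ℕ} {v : List ℕ}
    (h : FlatL ((a :: u') ++ y :: v)) (hyv : y ∉ v) (hyp : y < u'.getLastD a) :
    ∀ b ∈ v, y < b := by
  have hrs : rs ((a :: u') ++ y :: v) = a :: (ds a u' ++ (y :: ds y v)) := by
    rw [List.cons_append, rs, ds_append, ds, if_pos hyp]
  rw [FlatL, hrs] at h
  intro b hb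
  obtain ⟨s, hs, hsb⟩ := exists_start_le y v b hb
  rcases hs with rfl | hs
  · exact lt_of_le_of_ne hsb (fun he => hyv (he ▸ hb))
  · have hsub : (y :: ds y v).Sublist (a :: (ds a u' ++ (y :: ds y v))) :=
      (List.sublist_append_right _ _).cons a
    have hp : (y :: ds y v).Pairwise (· < ·) := h.sublist hsub
    exact lt_of_lt_of_le ((List.pairwise_cons.1 hp).1 s hs) hsb

lemma flat_append_max {l : List ℕ} {n : ℕ} (h : ∀ x ∈ l, x < n) :
    FlatL (l ++ [n]) ↔ FlatL l := by
  cases l with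
  | nil => simp [FlatL, rs, ds]
  | cons a u' =>
    have hp : u'.getLastD a ∈ a :: u' := List.getLastD_mem_cons
    have hpn : u'.getLastD a < n := h _ hp
    have : rs ((a :: u') ++ [n]) = rs (a :: u') := by
      rw [List.cons_append, rs, ds_append, rs,
        show ds (u'.getLastD a) [n] = [] from by rw [ds, if_neg (not_lt.2 hpn.le)]; rfl,
        List.append_nil]
    rw [FlatL, this, FlatL]

lemma rlm_append_max {l : List ℕ} {n : ℕ} (h : ∀ x ∈ l, x < n) :
    rlmL (l ++ [n]) = rlmL l + 1 := by
  induction l with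
  | nil => simp [rlmL]
  | cons a l ih =>
    have han : a < n := h a (List.mem_cons_self)
    have hcond : (∀ b ∈ l ++ [n], a < b) ↔ (∀ b ∈ l, a < b) := by
      constructor
      · intro h' b hb; exact h' b (List.mem_append_left _ hb)
      · intro h' b hb
        rcases List.mem_append.1 hb with hb | hb
        · exact h' b hb
        · rw [List.mem_singleton.1 hb]; exact han
    rw [List.cons_append, rlmL, rlmL, ih (fun x hx => h x (List.mem_cons_of_mem _ hx)),
      if_congr hcond rfl rfl]
    ring

lemma rlm_insert_mid {n : ℕ} (u w : List ℕ) (hw : w ≠ [])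
    (hu : ∀ x ∈ u, x < n) (hwn : ∀ x ∈ w, x < n) :
    rlmL (u ++ n :: w) = rlmL (u ++ w) := by
  induction u with
  | nil =>
    obtain ⟨c, w', rfl⟩ := List.exists_cons_of_ne_nil hw
    rw [List.nil_append, List.nil_append, rlmL]
    have : ¬ (∀ b ∈ c :: w', n < b) := by
      intro h'
      exact absurd (h' c (List.mem_cons_self)) (not_lt.2 (hwn c (List.mem_cons_self)).le)
    rw [if_neg this, add_zero]
  | cons a u ih =>
    have hcond : (∀ b ∈ u ++ n :: w, a < b) ↔ (∀ b ∈ u ++ w, a < b) := by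
      constructor
      · intro h' b hb
        rcases List.mem_append.1 hb with hb | hb
        · exact h' b (List.mem_append_left _ hb)
        · exact h' b (List.mem_append_right _ (List.mem_cons_of_mem _ hb))
      · intro h' b hb
        rcases List.mem_append.1 hb with hb | hb
        · exact h' b (List.mem_append_left _ hb)
        · rcases List.mem_cons.1 hb with rfl | hb
          · exact hu a (List.mem_cons_self)
          · exact h' b (List.mem_append_right _ hb)
    rw [List.cons_append, List.cons_append, rlmL, rlmL,
      ih (fun x hx => hu x (List.mem_cons_of_mem _ hx)), if_congr hcond rfl rfl]

lemma flat_cons_max_false {n y : ℕ} {v : List ℕ} (hy : y < n) :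
    ¬ FlatL (n :: y :: v) := by
  intro h
  rw [FlatL, rs, ds, if_pos hy] at h
  exact absurd ((List.pairwise_cons.1 h).1 y (List.mem_cons_self)) (not_lt.2 hy.le)

end FlatAux2

namespace FlatAux3
open FlatAux FlatAux2

lemma flat_insert_mid {n y : ℕ} {v : List ℕ} (a : ℕ) (u' : List ℕ)
    (hyv : y ∉ v) (hyu : y ∉ a :: u')
    (hall : ∀ x ∈ (a :: u') ++ y :: v, x < n) :
    FlatL ((a :: u') ++ n :: y :: v) ↔ (FlatL ((a :: u') ++ y :: v) ∧ ∀ b ∈ v, y < b) := by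
  have hpmem : u'.getLastD a ∈ a :: u' := List.getLastD_mem_cons
  have hpn : u'.getLastD a < n := hall _ (List.mem_append_left _ hpmem)
  have hyn : y < n := hall _ (List.mem_append_right _ (List.mem_cons_self))
  have hrsins : rs ((a :: u') ++ n :: y :: v) = a :: (ds a u' ++ (y :: ds y v)) := by
    rw [List.cons_append, rs, ds_append,
      show ds (u'.getLastD a) (n :: y :: v) = y :: ds y v from by
        rw [ds, if_neg (not_lt.2 hpn.le), ds, if_pos hyn]]
  by_cases hyp : y < u'.getLastD a
  · have hrsσ : rs ((a :: u') ++ y :: v) = a :: (ds a u' ++ (y :: ds y v)) := by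
      rw [List.cons_append, rs, ds_append, ds, if_pos hyp]
    constructor
    · intro h
      have hσ : FlatL ((a :: u') ++ y :: v) := by
        rw [FlatL, hrsσ]; rw [FlatL, hrsins] at h; exact h
      exact ⟨hσ, start_rlm a u' hσ hyv hyp⟩
    · rintro ⟨h1, -⟩
      rw [FlatL, hrsins]; rw [FlatL, hrsσ] at h1; exact h1
  · have hrsσ : rs ((a :: u') ++ y :: v) = a :: (ds a u' ++ ds y v) := by
      rw [List.cons_append, rs, ds_append, ds, if_neg hyp]
    constructor
    · intro h
      constructor
      · rw [FlatL, hrsσ]; rw [FlatL, hrsins] at h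
        exact h.sublist (List.Sublist.cons₂ a
          (List.Sublist.append_left (List.Sublist.cons y (List.Sublist.refl _)) _))
      · have hd : (a :: (u' ++ [n])) ++ y :: v = (a :: u') ++ n :: y :: v := by
          simp
        have h' : FlatL ((a :: (u' ++ [n])) ++ y :: v) := by rw [hd]; exact h
        exact start_rlm a (u' ++ [n]) h' hyv
          (by rw [getLastD_append_singleton]; exact hyn)
    · rintro ⟨hσ, hrlm⟩
      rw [FlatL, hrsins]
      rw [FlatL, hrsσ] at hσ
      obtain ⟨h1, h2⟩ := List.pairwise_cons.1 hσ
      obtain ⟨p1, p2, p12⟩ := List.pairwise_append.1 h2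
      have hyds : ∀ t ∈ ds y v, y < t := fun t ht => hrlm t ((ds_sublist y v).subset ht)
      have hpairu : (a :: ds a u').Pairwise (· < ·) :=
        hσ.sublist (List.Sublist.cons₂ a (List.sublist_append_left _ _))
      have hle : ∀ s ∈ a :: ds a u', s ≤ u'.getLastD a := by
        intro s hs
        have h1' : s ≤ (ds a u').getLastD a := le_getLastD_of_pairwise hpairu hs
        cases u' with
        | nil => simpa [ds] using h1'
        | cons c w => exact le_trans h1' (ds_getLastD_le (c :: w) a a (by simp))
      have hsy : ∀ s ∈ a :: ds a u', s < y := by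
        intro s hs
        have hsu : s ∈ a :: u' := by
          rcases List.mem_cons.1 hs with rfl | hs'
          · exact List.mem_cons_self
          · exact List.mem_cons_of_mem _ ((ds_sublist a u').subset hs')
        exact lt_of_le_of_ne (le_trans (hle s hs) (not_lt.1 hyp))
          (fun he => hyu (he ▸ hsu))
      rw [List.pairwise_cons]
      refine ⟨?_, ?_⟩
      · intro x hx
        rcases List.mem_append.1 hx with hx | hx
        · exact h1 x (List.mem_append_left _ hx)
        · rcases List.mem_cons.1 hx with rfl | hx
          · exact hsy a (List.mem_cons_self)
          · exact lt_trans (hsy a (List.mem_cons_self)) (hyds x hx)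
      · rw [List.pairwise_append]
        refine ⟨p1, ?_, ?_⟩
        · rw [List.pairwise_cons]; exact ⟨hyds, p2⟩
        · intro s hs t ht
          rcases List.mem_cons.1 ht with rfl | ht
          · exact hsy s (List.mem_cons_of_mem _ hs)
          · exact p12 s hs t ht

end FlatAux3

namespace FlatAux4
open FlatAux FlatAux2 FlatAux3

def RlmAtD (l : List ℕ) (i : ℕ) : Prop := ∀ b ∈ l.drop (i + 1), l.getD i 0 < b

instance : ∀ l i, Decidable (RlmAtD l i) := fun l i => by unfold RlmAtD; infer_instance

lemma rlm_eq_sum (l : List ℕ) :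
    rlmL l = ∑ i ∈ Finset.range l.length, if RlmAtD l i then 1 else 0 := by
  induction l with
  | nil => simp [rlmL]
  | cons a l ih =>
    rw [List.length_cons, Finset.sum_range_succ', rlmL, ih]
    have e0 : (if (∀ b ∈ l, a < b) then (1:ℕ) else 0) = (if RlmAtD (a :: l) 0 then 1 else 0) :=
      if_congr (by simp [RlmAtD, List.drop_succ_cons, List.getD_cons_zero]) rfl rfl
    have e1 : ∀ i : ℕ, (if RlmAtD l i then (1:ℕ) else 0) =
        (if RlmAtD (a :: l) (i + 1) then 1 else 0) := fun i =>
      if_congr (by simp [RlmAtD, List.drop_succ_cons, List.getD_cons_succ]) rfl rfl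
    simp only [e0, e1]

lemma rlm_pos {l : List ℕ} (h : l ≠ []) : 1 ≤ rlmL l := by
  induction l with
  | nil => exact absurd rfl h
  | cons a l ih =>
    cases l with
    | nil => simp [rlmL]
    | cons b t =>
      rw [rlmL]
      exact le_trans (ih (by simp)) (Nat.le_add_right _ _)

lemma rlm_le_length (l : List ℕ) : rlmL l ≤ l.length := by
  induction l with
  | nil => simp [rlmL]
  | cons a l ih =>
    rw [rlmL, List.length_cons]
    split
    · omega
    · omega

lemma head_rlmAtD {a : ℕ} {t : List ℕ} (h : FlatL (a :: t)) (hnd : (a :: t).Nodup) :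
    RlmAtD (a :: t) 0 := by
  intro b hb
  simp only [List.drop_succ_cons, List.drop_zero] at hb
  rw [List.getD_cons_zero]
  exact head_lt_of_flat h (List.nodup_cons.1 hnd).1 b hb

lemma sum_slots (l : List ℕ) (h0 : RlmAtD l 0) (hne : l ≠ []) :
    (∑ i ∈ Finset.range l.length, if 1 ≤ i ∧ RlmAtD l i then 1 else 0) + 1 = rlmL l := by
  obtain ⟨a, t, rfl⟩ := List.exists_cons_of_ne_nil hne
  rw [rlm_eq_sum, List.length_cons, Finset.sum_range_succ', Finset.sum_range_succ']
  have e1 : ∀ i : ℕ, (if 1 ≤ i + 1 ∧ RlmAtD (a :: t) (i + 1) then (1:ℕ) else 0) =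
      (if RlmAtD (a :: t) (i + 1) then 1 else 0) := by
    intro i
    apply if_congr _ rfl rfl
    simp [Nat.succ_le_succ_iff]
  simp only [e1]
  rw [if_neg (by simp), if_pos h0]

end FlatAux4

namespace FlatAux5
open FlatAux FlatAux2 FlatAux3 FlatAux4

def permsL (n : ℕ) : Finset (List ℕ) := ((List.range n).permutations).toFinset

lemma mem_permsL {n : ℕ} {l : List ℕ} : l ∈ permsL n ↔ l.Perm (List.range n) := by
  rw [permsL, List.mem_toFinset, List.mem_permutations]

lemma permsL_length {n : ℕ} {l : List ℕ} (h : l ∈ permsL n) : l.length = n := by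
  rw [(mem_permsL.1 h).length_eq, List.length_range]

lemma permsL_nodup {n : ℕ} {l : List ℕ} (h : l ∈ permsL n) : l.Nodup :=
  ((mem_permsL.1 h).nodup_iff).2 (List.nodup_range)

lemma permsL_lt {n : ℕ} {l : List ℕ} (h : l ∈ permsL n) : ∀ x ∈ l, x < n := by
  intro x hx
  exact List.mem_range.1 (((mem_permsL.1 h).mem_iff).1 hx)

lemma insertIdx_eq (x : ℕ) : ∀ (i : ℕ) (l : List ℕ), i ≤ l.length →
    List.insertIdx l i x = l.take i ++ x :: l.drop i := by
  intro i
  induction i with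
  | zero => intro l _; simp
  | succ i ih =>
    intro l hl
    cases l with
    | nil => simp at hl
    | cons b t =>
      rw [List.insertIdx_succ_cons, ih t (by simpa using hl)]
      simp

lemma not_mem_take_idxOf (a : ℕ) : ∀ l : List ℕ, a ∉ l.take (l.idxOf a) := by
  intro l
  induction l with
  | nil => simp
  | cons b t ih =>
    by_cases hba : b = a
    · subst hba
      rw [List.idxOf_cons_self, List.take_zero]
      simp
    · rw [List.idxOf_cons_ne _ (by simpa using hba), List.take_succ_cons]
      intro hmem
      rcases List.mem_cons.1 hmem with h | h
      · exact hba h.symm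
      · exact ih h

lemma idxOf_append_cons (x : ℕ) : ∀ (u w : List ℕ), x ∉ u →
    (u ++ x :: w).idxOf x = u.length := by
  intro u
  induction u with
  | nil => intro w _; simp
  | cons c u ih =>
    intro w hx
    have hcx : c ≠ x := fun h => hx (h ▸ List.mem_cons_self)
    rw [List.cons_append, List.idxOf_cons_ne _ (by simpa using hcx),
      ih w (fun h => hx (List.mem_cons_of_mem _ h)), List.length_cons]

lemma sum_permsL_succ (n : ℕ) (f : List ℕ → ℕ) :
    ∑ l ∈ permsL (n + 1), f l =
      ∑ σ ∈ permsL n, ∑ i ∈ Finset.range (n + 1), f (List.insertIdx σ i n) := by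
  have key : ∑ p ∈ (permsL n) ×ˢ Finset.range (n + 1), f (List.insertIdx p.1 p.2 n)
      = ∑ l ∈ permsL (n + 1), f l := by
    apply Finset.sum_nbij' (i := fun p => List.insertIdx p.1 p.2 n)
      (j := fun l => (l.erase n, l.idxOf n))
    · -- hi
      rintro ⟨σ, i⟩ hp
      obtain ⟨hσ, hi⟩ := Finset.mem_product.1 hp
      have hlen : σ.length = n := permsL_length hσ
      have hperm : (List.insertIdx σ i n).Perm (n :: σ) :=
        List.perm_insertIdx n σ (by rw [hlen]; exact Nat.lt_succ_iff.1 (Finset.mem_range.1 hi))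
      have h1 : (n :: σ).Perm (List.range (n + 1)) := by
        rw [List.range_succ]
        exact ((mem_permsL.1 hσ).cons n).trans (List.perm_append_singleton n _).symm
      exact mem_permsL.2 (hperm.trans h1)
    · -- hj
      intro l hl
      have hperm := mem_permsL.1 hl
      have hn : n ∈ l := hperm.mem_iff.2 (List.mem_range.2 (Nat.lt_succ_self n))
      apply Finset.mem_product.2
      constructor
      · have h2 : (List.range (n + 1)).erase n = List.range n := by
          rw [List.range_succ, List.erase_append_right _ (by simp),
            List.erase_cons_head, List.append_nil]
        exact mem_permsL.2 (h2 ▸ hperm.erase n)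
      · apply Finset.mem_range.2
        have hlt := List.idxOf_lt_length_iff.2 hn
        rw [permsL_length hl] at hlt
        exact hlt
    · -- left_inv
      rintro ⟨σ, i⟩ hp
      obtain ⟨hσ, hi⟩ := Finset.mem_product.1 hp
      have hlen : σ.length = n := permsL_length hσ
      have hile : i ≤ σ.length := by rw [hlen]; exact Nat.lt_succ_iff.1 (Finset.mem_range.1 hi)
      have hnσ : n ∉ σ := fun h => lt_irrefl n (permsL_lt hσ n h)
      have hins : List.insertIdx σ i n = σ.take i ++ n :: σ.drop i := insertIdx_eq n i σ hile
      have hnt : n ∉ σ.take i := fun h => hnσ (List.take_subset _ _ h)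
      have hidx : (List.insertIdx σ i n).idxOf n = i := by
        rw [hins, idxOf_append_cons n _ _ hnt, List.length_take, min_eq_left hile]
      have hrase : (List.insertIdx σ i n).erase n = σ := by
        rw [hins, List.erase_append_right _ hnt, List.erase_cons_head, List.take_append_drop]
      rw [Prod.mk.injEq]
      exact ⟨by rw [hrase], by rw [hidx]⟩
    · -- right_inv
      intro l hl
      have hperm := mem_permsL.1 hl
      have hn : n ∈ l := hperm.mem_iff.2 (List.mem_range.2 (Nat.lt_succ_self n))
      have hk : l.idxOf n < l.length := List.idxOf_lt_length_iff.2 hn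
      have hgetk : l[l.idxOf n] = n := List.getElem_idxOf hk
      have hdec : l = l.take (l.idxOf n) ++ n :: l.drop (l.idxOf n + 1) := by
        conv_lhs => rw [← List.take_append_drop (l.idxOf n) l]
        rw [List.drop_eq_getElem_cons hk, hgetk]
      have hnt : n ∉ l.take (l.idxOf n) := not_mem_take_idxOf n l
      have hrase : l.erase n = l.take (l.idxOf n) ++ l.drop (l.idxOf n + 1) := by
        conv_lhs => rw [hdec]
        rw [List.erase_append_right _ hnt, List.erase_cons_head]
      simp only
      rw [hrase]
      have hlen2 : (l.take (l.idxOf n)).length = l.idxOf n := by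
        rw [List.length_take, min_eq_left hk.le]
      rw [insertIdx_eq n _ _ (by rw [List.length_append, hlen2]; omega),
        List.take_left' hlen2, List.drop_left' hlen2]
      exact hdec.symm
    · -- values
      rintro ⟨σ, i⟩ _
      rfl
  rw [← key, Finset.sum_product]

end FlatAux5

namespace FlatAux6
open FlatAux FlatAux2 FlatAux3 FlatAux4 FlatAux5

lemma inner_sum {n : ℕ} {σ : List ℕ} (hσ : σ ∈ permsL n) (r : ℕ) :
    (∑ i ∈ Finset.range (n + 1),
      if FlatL (List.insertIdx σ i n) ∧ rlmL (List.insertIdx σ i n) = r + 1 then (1:ℕ) else 0)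
    = (if FlatL σ ∧ rlmL σ = r + 1 then r else 0)
      + (if FlatL σ ∧ rlmL σ = r then 1 else 0) := by
  have hlen := permsL_length hσ
  have hnd := permsL_nodup hσ
  have hltn := permsL_lt hσ
  rw [Finset.sum_range_succ]
  have hend : List.insertIdx σ n n = σ ++ [n] := by
    have h1 : σ.take n = σ := by rw [← hlen]; exact List.take_length
    have h2 : σ.drop n = [] := by rw [← hlen]; exact List.drop_length
    rw [insertIdx_eq n n σ hlen.ge, h1, h2]
  have hendite : (if FlatL (List.insertIdx σ n n) ∧ rlmL (List.insertIdx σ n n) = r + 1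
      then (1:ℕ) else 0) = (if FlatL σ ∧ rlmL σ = r then 1 else 0) := by
    apply if_congr _ rfl rfl
    rw [hend, flat_append_max hltn, rlm_append_max hltn]
    simp
  rw [hendite]
  congr 1
  have hmid : ∀ i ∈ Finset.range n,
      (if FlatL (List.insertIdx σ i n) ∧ rlmL (List.insertIdx σ i n) = r + 1 then (1:ℕ) else 0) =
      (if (FlatL σ ∧ rlmL σ = r + 1) ∧ (1 ≤ i ∧ RlmAtD σ i) then 1 else 0) := by
    intro i hi
    have hilt : i < σ.length := by rw [hlen]; exact Finset.mem_range.1 hi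
    have hgetD : σ.getD i 0 = σ[i] := List.getD_eq_getElem σ 0 hilt
    have hdec : σ = σ.take i ++ σ.getD i 0 :: σ.drop (i + 1) := by
      rw [hgetD]
      conv_lhs => rw [← List.take_append_drop i σ]
      rw [List.drop_eq_getElem_cons hilt]
    have hins : List.insertIdx σ i n = σ.take i ++ n :: (σ.getD i 0 :: σ.drop (i + 1)) := by
      rw [insertIdx_eq n i σ hilt.le, List.drop_eq_getElem_cons hilt, hgetD]
    have hnd2 : (σ.take i ++ σ.getD i 0 :: σ.drop (i + 1)).Nodup := hdec ▸ hnd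
    obtain ⟨hndu, hndv, hdisj⟩ := List.nodup_append.1 hnd2
    have hyv : σ.getD i 0 ∉ σ.drop (i + 1) := (List.nodup_cons.1 hndv).1
    have hyu : σ.getD i 0 ∉ σ.take i := fun h => hdisj _ h _ (List.mem_cons_self) rfl
    have hall : ∀ x ∈ σ.take i ++ σ.getD i 0 :: σ.drop (i + 1), x < n :=
      fun x hx => hltn x (hdec ▸ hx)
    have hrlm : rlmL (List.insertIdx σ i n) = rlmL σ := by
      rw [hins, rlm_insert_mid (σ.take i) (σ.getD i 0 :: σ.drop (i + 1)) (by simp)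
        (fun x hx => hall x (List.mem_append_left _ hx))
        (fun x hx => hall x (List.mem_append_right _ hx)), ← hdec]
    cases i with
    | zero =>
      have hnotflat : ¬ FlatL (List.insertIdx σ 0 n) := by
        rw [hins]
        simp only [List.take_zero, List.nil_append]
        exact flat_cons_max_false (by rw [hgetD]; exact hltn _ (List.getElem_mem hilt))
      rw [if_neg (fun hc => hnotflat hc.1)]
      simp
    | succ j =>
      have htne : σ.take (j + 1) ≠ [] := by
        have hh : (σ.take (j + 1)).length = j + 1 := by
          rw [List.length_take, min_eq_left hilt.le]
        intro h; rw [h] at hh; simp at hh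
      obtain ⟨a, u', hau⟩ := List.exists_cons_of_ne_nil htne
      have hiff := flat_insert_mid (n := n) (y := σ.getD (j+1) 0) (v := σ.drop (j + 2)) a u'
        hyv (by rw [← hau]; exact hyu) (by rw [← hau]; exact hall)
      rw [← hau] at hiff
      rw [← hdec] at hiff
      apply if_congr _ rfl rfl
      rw [hrlm, hins, hiff]
      have hr : RlmAtD σ (j + 1) ↔ (∀ b ∈ σ.drop (j + 2), σ.getD (j+1) 0 < b) := Iff.rfl
      constructor
      · rintro ⟨⟨h1, h2⟩, h3⟩
        exact ⟨⟨h1, h3⟩, ⟨Nat.succ_le_succ (Nat.zero_le _), hr.2 h2⟩⟩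
      · rintro ⟨⟨h1, h3⟩, ⟨-, h2⟩⟩
        exact ⟨⟨h1, hr.1 h2⟩, h3⟩
  rw [Finset.sum_congr rfl hmid]
  by_cases hA : FlatL σ ∧ rlmL σ = r + 1
  · have e1 : ∀ i : ℕ, ((FlatL σ ∧ rlmL σ = r + 1) ∧ (1 ≤ i ∧ RlmAtD σ i)) ↔
        (1 ≤ i ∧ RlmAtD σ i) := fun i => and_iff_right hA
    rw [if_pos hA]
    have hne : σ ≠ [] := by
      intro h
      rw [h] at hA
      simp [rlmL] at hA
    obtain ⟨a, t, rfl⟩ := List.exists_cons_of_ne_nil hne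
    have h0 : RlmAtD (a :: t) 0 := head_rlmAtD hA.1 hnd
    have hslots := sum_slots (a :: t) h0 (by simp)
    rw [hA.2] at hslots
    have : (∑ i ∈ Finset.range n,
        if ((FlatL (a :: t) ∧ rlmL (a :: t) = r + 1) ∧ (1 ≤ i ∧ RlmAtD (a :: t) i))
        then (1:ℕ) else 0) = ∑ i ∈ Finset.range (a :: t).length,
        (if 1 ≤ i ∧ RlmAtD (a :: t) i then 1 else 0) := by
      rw [hlen]
      exact Finset.sum_congr rfl (fun i _ => if_congr (e1 i) rfl rfl)
    rw [this]
    omega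
  · rw [if_neg hA]
    rw [Finset.sum_eq_zero]
    intro i _
    rw [if_neg (fun hc => hA hc.1)]

def cfl (n r : ℕ) : ℕ := ((permsL n).filter (fun l => FlatL l ∧ rlmL l = r)).card

lemma cfl_succ (n r : ℕ) : cfl (n + 1) (r + 1) = r * cfl n (r + 1) + cfl n r := by
  rw [cfl, Finset.card_filter, sum_permsL_succ n
    (fun l => if FlatL l ∧ rlmL l = r + 1 then 1 else 0)]
  rw [Finset.sum_congr rfl (fun σ hσ => inner_sum hσ r), Finset.sum_add_distrib]
  congr 1
  · rw [cfl, Finset.card_filter, Finset.mul_sum]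
    exact Finset.sum_congr rfl (fun σ _ => by split <;> simp
    )
  · rw [cfl, Finset.card_filter]

lemma cfl_base (r : ℕ) : cfl 0 r = if r = 0 then 1 else 0 := by
  have : permsL 0 = {([] : List ℕ)} := by
    ext l
    rw [mem_permsL, Finset.mem_singleton, List.range_zero, List.perm_nil]
  rw [cfl, this]
  rcases eq_or_ne r 0 with rfl | hr
  · rw [if_pos rfl]
    rw [Finset.filter_singleton, if_pos ⟨by simp [FlatL, rs], rfl⟩, Finset.card_singleton]
  · rw [if_neg hr]
    rw [Finset.filter_singleton, if_neg (fun hc => hr (by simpa [rlmL] using hc.2.symm)),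
      Finset.card_empty]

lemma cfl_zero_rlm (n : ℕ) : cfl (n + 1) 0 = 0 := by
  rw [cfl, Finset.card_eq_zero, Finset.filter_eq_empty_iff]
  intro l hl
  rintro ⟨-, hr⟩
  have : l ≠ [] := by
    intro h
    have := permsL_length hl
    rw [h] at this
    simp at this
  exact absurd hr (by have := rlm_pos this; omega)

lemma cfl_eq (m r : ℕ) : cfl (m + 1) (r + 1) = stirling2 m r := by
  induction m generalizing r with
  | zero =>
    rw [cfl_succ, cfl_base, cfl_base]
    cases r with
    | zero => simp [stirling2]
    | succ r' => simp [stirling2]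
  | succ m ih =>
    rw [cfl_succ]
    cases r with
    | zero =>
      rw [cfl_zero_rlm]
      simp [stirling2]
    | succ r' =>
      rw [ih r', ih (r' + 1), stirling2]

end FlatAux6

namespace FlatAux7
open FlatAux FlatAux2 FlatAux3 FlatAux4 FlatAux5 FlatAux6

def stB (l : List ℕ) (i : ℕ) : Bool := (i == 0) || decide (l.getD i 0 < l.getD (i - 1) 0)

lemma ds_eq_filter : ∀ (l : List ℕ) (p : ℕ), ds p l =
    ((List.range l.length).filter
      (fun i => decide (l.getD i 0 < (p :: l).getD i 0))).map (fun i => l.getD i 0) := by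
  intro l
  induction l with
  | nil => intro p; simp [ds]
  | cons b t ih =>
    intro p
    have hc : (fun i => decide ((b :: t).getD i 0 < (p :: b :: t).getD i 0)) ∘ Nat.succ
        = fun i => decide (t.getD i 0 < (b :: t).getD i 0) := by
      funext i
      simp [List.getD_cons_succ]
    by_cases hb : b < p
    · have hcond : decide ((b :: t).getD 0 0 < (p :: b :: t).getD 0 0) = true := by
        simp [hb]
      rw [ds, if_pos hb, List.length_cons, List.range_succ_eq_map, List.filter_cons,
        List.filter_map, hc, if_pos hcond, List.map_cons, List.map_map, List.getD_cons_zero]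
      congr 1
      rw [ih b]
      exact List.map_congr_left (fun i _ => by simp [List.getD_cons_succ])
    · have hcond : ¬ (decide ((b :: t).getD 0 0 < (p :: b :: t).getD 0 0) = true) := by
        simp [hb]
      rw [ds, if_neg hb, List.length_cons, List.range_succ_eq_map, List.filter_cons,
        List.filter_map, hc, if_neg hcond, List.map_map]
      rw [ih b]
      exact List.map_congr_left (fun i _ => by simp [List.getD_cons_succ])

lemma rs_eq_filter (l : List ℕ) : rs l =
    ((List.range l.length).filter (stB l)).map (fun i => l.getD i 0) := by
  cases l with
  | nil => simp [rs]
  | cons a t =>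
    rw [rs, List.length_cons, List.range_succ_eq_map, List.filter_cons, List.filter_map]
    have hc : stB (a :: t) ∘ Nat.succ = fun i => decide (t.getD i 0 < (a :: t).getD i 0) := by
      funext i
      simp [stB, List.getD_cons_succ]
    rw [hc]
    have h0 : stB (a :: t) 0 = true := by simp [stB]
    rw [h0]
    simp only [List.map_cons, List.getD_cons_zero]
    congr 1
    rw [List.map_map, ds_eq_filter t a]
    apply List.map_congr_left
    intro i _
    simp [List.getD_cons_succ]

lemma pair_sublist_of_sorted : ∀ {L : List ℕ}, L.Pairwise (· < ·) →
    ∀ {i j : ℕ}, i ∈ L → j ∈ L → i < j → [i, j].Sublist L := by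
  intro L
  induction L with
  | nil => intro _ i j hi; simp at hi
  | cons c t ih =>
    intro h i j hi hj hij
    obtain ⟨hc, ht⟩ := List.pairwise_cons.1 h
    rcases List.mem_cons.1 hi with rfl | hi
    · rcases List.mem_cons.1 hj with rfl | hj
      · exact absurd hij (lt_irrefl _)
      · exact List.Sublist.cons₂ _ (List.singleton_sublist.2 hj)
    · have hjt : j ∈ t := by
        rcases List.mem_cons.1 hj with h' | h'
        · exfalso
          have hci : c < i := hc i hi
          rw [h'] at hij
          exact absurd hij (not_lt.2 hci.le)
        · exact h'
      exact (ih ht hi hjt hij).cons c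

def StIdxP (l : List ℕ) (i : ℕ) : Prop := i = 0 ∨ l.getD i 0 < l.getD (i - 1) 0

lemma stB_iff (l : List ℕ) (i : ℕ) : stB l i = true ↔ StIdxP l i := by
  simp [stB, StIdxP]

lemma flatL_iff_idx (l : List ℕ) : FlatL l ↔
    ∀ i j : ℕ, i < j → j < l.length → StIdxP l i → StIdxP l j →
      l.getD i 0 < l.getD j 0 := by
  rw [FlatL, rs_eq_filter, List.pairwise_map]
  constructor
  · intro h i j hij hj hsi hsj
    have hi' : i ∈ (List.range l.length).filter (stB l) :=
      List.mem_filter.2 ⟨List.mem_range.2 (lt_trans hij hj), (stB_iff l i).2 hsi⟩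
    have hj' : j ∈ (List.range l.length).filter (stB l) :=
      List.mem_filter.2 ⟨List.mem_range.2 hj, (stB_iff l j).2 hsj⟩
    have hpl : ((List.range l.length).filter (stB l)).Pairwise (· < ·) :=
      (List.pairwise_lt_range).filter _
    exact List.pairwise_iff_forall_sublist.1 h (pair_sublist_of_sorted hpl hi' hj' hij)
  · intro h
    apply List.Pairwise.imp_of_mem (R := (· < ·)) _ ((List.pairwise_lt_range).filter _)
    intro a b ha hb hab
    obtain ⟨ha1, ha2⟩ := List.mem_filter.1 ha
    obtain ⟨hb1, hb2⟩ := List.mem_filter.1 hb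
    exact h a b hab (List.mem_range.1 hb1) ((stB_iff l a).1 ha2) ((stB_iff l b).1 hb2)

lemma mem_drop_iff {l : List ℕ} {k b : ℕ} :
    b ∈ l.drop k ↔ ∃ j, ∃ h : j < l.length, k ≤ j ∧ l[j] = b := by
  rw [List.mem_iff_getElem]
  constructor
  · rintro ⟨m, hm, he⟩
    have hmm : k + m < l.length := by
      have := hm
      rw [List.length_drop] at this
      omega
    refine ⟨k + m, hmm, Nat.le_add_right _ _, ?_⟩
    rw [← List.getElem_drop]
    exact he
  · rintro ⟨j, hj, hkj, he⟩
    refine ⟨j - k, ?_, ?_⟩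
    · rw [List.length_drop]; omega
    · rw [List.getElem_drop]
      have : k + (j - k) = j := by omega
      simp_rw [this]
      exact he

section transfer
variable {n : ℕ} (π : Equiv.Perm (Fin n))

def toL : List ℕ := List.ofFn (fun i => (π i).val)

lemma toL_length : (toL π).length = n := by rw [toL, List.length_ofFn]

lemma toL_getD (i : ℕ) (h : i < n) : (toL π).getD i 0 = (π ⟨i, h⟩).val := by
  rw [toL, List.getD_eq_getElem _ _ (by rw [List.length_ofFn]; exact h), List.getElem_ofFn]

lemma isRunStart_iff (i : ℕ) (h : i < n) :
    IsRunStart π ⟨i, h⟩ ↔ StIdxP (toL π) i := by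
  rw [IsRunStart, StIdxP]
  constructor
  · rintro (h0 | hlt)
    · exact Or.inl h0
    · refine Or.inr ?_
      rw [toL_getD π i h, toL_getD π (i - 1) (lt_of_le_of_lt (Nat.sub_le _ _) h)]
      exact hlt
  · rintro (h0 | hlt)
    · exact Or.inl h0
    · refine Or.inr ?_
      rw [toL_getD π i h, toL_getD π (i - 1) (lt_of_le_of_lt (Nat.sub_le _ _) h)] at hlt
      exact hlt

lemma flattened_iff : Flattened π ↔ FlatL (toL π) := by
  rw [flatL_iff_idx]
  constructor
  · intro h i j hij hj hsi hsj
    rw [toL_length] at hj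
    have hi : i < n := lt_trans hij hj
    rw [toL_getD π i hi, toL_getD π j hj]
    exact h ⟨i, hi⟩ ⟨j, hj⟩ ((isRunStart_iff π i hi).2 hsi) ((isRunStart_iff π j hj).2 hsj)
      (by exact hij)
  · intro h i j hsi hsj hij
    have := h i.val j.val hij (by rw [toL_length]; exact j.isLt)
      ((isRunStart_iff π i.val i.isLt).1 (by convert hsi))
      ((isRunStart_iff π j.val j.isLt).1 (by convert hsj))
    rw [toL_getD π i.val i.isLt, toL_getD π j.val j.isLt] at this
    exact this

lemma isRLMin_iff (i : ℕ) (h : i < n) :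
    IsRLMin π ⟨i, h⟩ ↔ RlmAtD (toL π) i := by
  rw [IsRLMin, RlmAtD]
  constructor
  · intro hr b hb
    obtain ⟨j, hj, hij, he⟩ := mem_drop_iff.1 hb
    rw [toL_length] at hj
    have hbv : b = (π ⟨j, hj⟩).val := by
      rw [← he, ← toL_getD π j hj, List.getD_eq_getElem]
    rw [toL_getD π i h, hbv]
    exact hr ⟨j, hj⟩ (by rw [Fin.mk_lt_mk]; omega)
  · intro hr j hij
    have hjval : (toL π)[j.val]'(by rw [toL_length]; exact j.isLt) = (π j).val := by
      rw [← List.getD_eq_getElem _ 0, toL_getD π j.val j.isLt]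
    have hmem : ((π j).val : ℕ) ∈ (toL π).drop (i + 1) :=
      mem_drop_iff.2 ⟨j.val, (by rw [toL_length]; exact j.isLt), (by
        rw [Fin.mk_lt_mk] at hij; omega), hjval⟩
    have := hr _ hmem
    rw [toL_getD π i h] at this
    exact this

open scoped Classical in
lemma rlmCount_eq : rlmCount π = rlmL (toL π) := by
  rw [rlm_eq_sum, toL_length, rlmCount]
  rw [Set.ncard_eq_toFinset_card', Set.toFinset_setOf, Finset.card_filter]
  rw [← Fin.sum_univ_eq_sum_range (fun i => if RlmAtD (toL π) i then 1 else 0) n]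
  apply Finset.sum_congr rfl
  intro i _
  apply if_congr _ rfl rfl
  have : (⟨i.val, i.isLt⟩ : Fin n) = i := rfl
  rw [← this]
  exact isRLMin_iff π i.val i.isLt

end transfer
end FlatAux7

namespace FlatAux8
open FlatAux FlatAux2 FlatAux3 FlatAux4 FlatAux5 FlatAux6 FlatAux7
open scoped Classical

lemma toL_perm {n : ℕ} (π : Equiv.Perm (Fin n)) : (toL π).Perm (List.range n) := by
  apply List.perm_of_nodup_nodup_toFinset_eq
  · rw [toL]
    exact List.nodup_ofFn.2 (fun i j hij => π.injective (Fin.ext hij))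
  · exact List.nodup_range
  · ext x
    rw [List.mem_toFinset, List.mem_toFinset, List.mem_range, toL, List.mem_ofFn]
    constructor
    · rintro ⟨k, rfl⟩
      exact (π k).isLt
    · intro hx
      exact ⟨π.symm ⟨x, hx⟩, by simp⟩

lemma sum_perm_eq (n : ℕ) :
    (∑ π ∈ Finset.univ.filter (fun π : Equiv.Perm (Fin n) => Flattened π), rlmCount π)
    = ∑ l ∈ (permsL n).filter FlatL, rlmL l := by
  apply Finset.sum_bij (i := fun π _ => toL π)
  · intro π hπ
    rw [Finset.mem_filter] at hπ ⊢
    exact ⟨mem_permsL.2 (toL_perm π), (flattened_iff π).1 hπ.2⟩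
  · intro π hπ π' hπ' h
    apply Equiv.ext
    intro i
    apply Fin.ext
    have h2 := congrArg (fun l : List ℕ => l.getD i.val 0) h
    rw [toL_getD π i.val i.isLt, toL_getD π' i.val i.isLt] at h2
    convert h2 <;> exact (Fin.eta i i.isLt).symm
  · intro l hl
    rw [Finset.mem_filter] at hl
    obtain ⟨hlp, hlf⟩ := hl
    have hlen : l.length = n := permsL_length hlp
    have hltn := permsL_lt hlp
    have hnd := permsL_nodup hlp
    have hfl : ∀ i : Fin n, i.val < l.length := fun i => by rw [hlen]; exact i.isLt
    let f : Fin n → Fin n := fun i => ⟨l[i.val]'(hfl i), hltn _ (List.getElem_mem (hfl i))⟩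
    have hfinj : Function.Injective f := by
      intro i j hij
      have hval : l[i.val]'(hfl i) = l[j.val]'(hfl j) := congrArg Fin.val hij
      have hget : l.get ⟨i.val, hfl i⟩ = l.get ⟨j.val, hfl j⟩ := by
        rw [List.get_eq_getElem, List.get_eq_getElem]
        exact hval
      have h3 := List.nodup_iff_injective_get.1 hnd hget
      have hv : i.val = j.val := by simpa using h3
      exact Fin.ext hv
    let π : Equiv.Perm (Fin n) := Equiv.ofBijective f (Finite.injective_iff_bijective.1 hfinj)
    have htoL : toL π = l := by
      apply List.ext_getElem
      · rw [toL_length, hlen]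
      · intro k h1 h2
        simp only [toL, List.getElem_ofFn]
        rfl
    refine ⟨π, ?_, htoL⟩
    rw [Finset.mem_filter]
    exact ⟨Finset.mem_univ _, (flattened_iff π).2 (htoL ▸ hlf)⟩
  · intro π hπ
    exact rlmCount_eq π

theorem part1 (n : ℕ) (hn : 1 ≤ n) :
    (∑ π ∈ Finset.univ.filter (fun π : Equiv.Perm (Fin n) => Flattened π), rlmCount π =
      ∑ k ∈ Finset.Icc 1 n, k * stirling2 (n - 1) (k - 1)) := by
  rw [sum_perm_eq n]
  have hmaps : ∀ l ∈ (permsL n).filter FlatL, rlmL l ∈ Finset.Icc 1 n := by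
    intro l hl
    rw [Finset.mem_filter] at hl
    have hlen := permsL_length hl.1
    have hne : l ≠ [] := by
      intro h
      rw [h] at hlen
      simp at hlen
      omega
    rw [Finset.mem_Icc]
    exact ⟨rlm_pos hne, hlen ▸ rlm_le_length l⟩
  rw [← Finset.sum_fiberwise_of_maps_to hmaps rlmL]
  apply Finset.sum_congr rfl
  intro r hr
  rw [Finset.mem_Icc] at hr
  rw [Finset.sum_congr rfl (fun l hl => (Finset.mem_filter.1 hl).2), Finset.sum_const,
    smul_eq_mul, Finset.filter_filter]
  obtain ⟨m, rfl⟩ : ∃ m, n = m + 1 := ⟨n - 1, by omega⟩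
  obtain ⟨r', rfl⟩ : ∃ r', r = r' + 1 := ⟨r - 1, by omega⟩
  have : ((permsL (m + 1)).filter (fun l => FlatL l ∧ rlmL l = r' + 1)).card
      = cfl (m + 1) (r' + 1) := rfl
  rw [this, cfl_eq]
  simp [Nat.mul_comm]

end FlatAux8

namespace BellAux
open Finset

variable {α : Type*} [DecidableEq α]

noncomputable instance fintypeFinpartition (s : Finset α) : Fintype (Finpartition s) := by
  have : Finite (Finpartition s) := by
    apply Finite.of_injective (fun P : Finpartition s => (⟨P.parts, by
      rw [Finset.mem_powerset]
      intro b hb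
      rw [Finset.mem_powerset]
      exact P.le hb⟩ : {u // u ∈ s.powerset.powerset}))
    intro P Q h
    exact Finpartition.ext (congrArg Subtype.val h)
  exact Fintype.ofFinite _

lemma parts_empty (P : Finpartition (∅ : Finset α)) : P.parts = ∅ := by
  rw [Finset.eq_empty_iff_forall_notMem]
  intro b hb
  have h1 : b ≤ ∅ := P.le hb
  have h2 : b = ∅ := Finset.subset_empty.1 h1
  exact P.bot_notMem (by rw [Finset.bot_eq_empty]; exact h2 ▸ hb)

section step
variable {a : α} {t : Finset α}

/-- add `{a}` as a new singleton part -/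
def addS (P : Finpartition t) (ha : a ∉ t) : Finpartition (insert a t) :=
  P.extend (b := {a}) (Finset.singleton_ne_empty a)
    (Finset.disjoint_singleton_right.2 ha)
    (by rw [sup_eq_union]; ext x; simp [or_comm])

lemma addS_parts (P : Finpartition t) (ha : a ∉ t) :
    (addS P ha).parts = insert {a} P.parts := Finpartition.extend_parts _ _ _ _

/-- add `a` to the existing part `b` -/
def addB (P : Finpartition t) (ha : a ∉ t) (b : Finset α) (hb : b ∈ P.parts) :
    Finpartition (insert a t) where
  parts := insert (insert a b) (P.parts.erase b)
  supIndep := by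
    rw [Finset.supIndep_iff_pairwiseDisjoint, Finset.coe_insert,
      Set.pairwiseDisjoint_insert]
    constructor
    · exact ((Finset.supIndep_iff_pairwiseDisjoint.1 P.supIndep).subset
        (by exact_mod_cast Finset.erase_subset _ _))
    · intro c hc _
      have hc' : c ∈ P.parts.erase b := by exact_mod_cast hc
      have hcb : c ≠ b := Finset.ne_of_mem_erase hc'
      have hcp : c ∈ P.parts := Finset.mem_of_mem_erase hc'
      have hdbc : Disjoint b c := (Finset.supIndep_iff_pairwiseDisjoint.1 P.supIndep)
        hb hcp (fun h => hcb h.symm)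
      simp only [id]
      rw [Finset.disjoint_insert_left]
      exact ⟨fun hac => ha (P.le hcp hac), hdbc⟩
  sup_parts := by
    have h1 : P.parts.sup id = t := P.sup_parts
    have h2 : P.parts = insert b (P.parts.erase b) := (Finset.insert_erase hb).symm
    have h3 : b ⊔ (P.parts.erase b).sup id = t := by
      conv_rhs => rw [← h1, h2]
      rw [Finset.sup_insert]
      rfl
    rw [Finset.sup_insert]
    simp only [id_eq] at h3 ⊢
    rw [sup_eq_union] at h3 ⊢
    rw [Finset.insert_union, h3]
  bot_notMem := by
    rw [Finset.mem_insert]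
    rintro (h | h)
    · exact Finset.insert_ne_empty a b h.symm
    · exact P.bot_notMem (Finset.mem_of_mem_erase h)

lemma addB_parts (P : Finpartition t) (ha : a ∉ t) (b : Finset α) (hb : b ∈ P.parts) :
    (addB P ha b hb).parts = insert (insert a b) (P.parts.erase b) := rfl

/-- remove the singleton part `{a}` -/
def eraseS (R : Finpartition (insert a t)) (ha : a ∉ t) (h : {a} ∈ R.parts) :
    Finpartition t where
  parts := R.parts.erase {a}
  supIndep := R.supIndep.subset (Finset.erase_subset _ _)
  sup_parts := by
    ext x
    rw [Finset.mem_sup]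
    constructor
    · rintro ⟨c, hc, hxc⟩
      have hcp : c ∈ R.parts := Finset.mem_of_mem_erase hc
      have hx2 : x ∈ insert a t := by
        rw [← R.sup_parts]
        exact Finset.mem_sup.2 ⟨c, hcp, hxc⟩
      simp only [id_eq] at hxc
      rcases Finset.mem_insert.1 hx2 with rfl | hx3
      · exfalso
        have : c = {x} := R.eq_of_mem_parts hcp h hxc (Finset.mem_singleton_self x)
        exact Finset.ne_of_mem_erase hc this
      · exact hx3
    · intro hx
      have hx2 : x ∈ insert a t := Finset.mem_insert_of_mem hx
      rw [← R.sup_parts] at hx2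
      obtain ⟨c, hc, hxc⟩ := Finset.mem_sup.1 hx2
      simp only [id_eq] at hxc
      refine ⟨c, Finset.mem_erase.2 ⟨?_, hc⟩, hxc⟩
      intro hceq
      rw [hceq, Finset.mem_singleton] at hxc
      exact ha (hxc ▸ hx)
  bot_notMem := fun hbot => R.bot_notMem (Finset.mem_of_mem_erase hbot)

lemma eraseS_parts (R : Finpartition (insert a t)) (ha : a ∉ t) (h : {a} ∈ R.parts) :
    (eraseS R ha h).parts = R.parts.erase {a} := rfl

/-- remove `a` from its (non-singleton) part -/
def shrinkB (R : Finpartition (insert a t)) (ha : a ∉ t) {B : Finset α}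
    (hB : B ∈ R.parts) (haB : a ∈ B) (hBne : B ≠ {a}) : Finpartition t where
  parts := insert (B.erase a) (R.parts.erase B)
  supIndep := by
    rw [Finset.supIndep_iff_pairwiseDisjoint, Finset.coe_insert,
      Set.pairwiseDisjoint_insert]
    constructor
    · exact ((Finset.supIndep_iff_pairwiseDisjoint.1 R.supIndep).subset
        (by exact_mod_cast Finset.erase_subset _ _))
    · intro c hc _
      have hc' : c ∈ R.parts.erase B := by exact_mod_cast hc
      have hcb : c ≠ B := Finset.ne_of_mem_erase hc'
      have hcp : c ∈ R.parts := Finset.mem_of_mem_erase hc'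
      have hdbc : Disjoint B c := (Finset.supIndep_iff_pairwiseDisjoint.1 R.supIndep)
        hB hcp (fun h => hcb h.symm)
      simp only [id]
      exact hdbc.mono_left (Finset.erase_subset _ _)
  sup_parts := by
    ext x
    rw [Finset.mem_sup]
    constructor
    · rintro ⟨c, hc, hxc⟩
      simp only [id_eq] at hxc
      rcases Finset.mem_insert.1 hc with rfl | hc2
      · obtain ⟨hxa, hxB⟩ := Finset.mem_erase.1 hxc
        have : x ∈ insert a t := R.le hB hxB
        rcases Finset.mem_insert.1 this with rfl | h
        · exact absurd rfl hxa
        · exact h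
      · have hcp : c ∈ R.parts := Finset.mem_of_mem_erase hc2
        have hx2 : x ∈ insert a t := R.le hcp hxc
        rcases Finset.mem_insert.1 hx2 with rfl | hx3
        · exfalso
          exact Finset.ne_of_mem_erase hc2 (R.eq_of_mem_parts hcp hB hxc haB)
        · exact hx3
    · intro hx
      have hx2 : x ∈ insert a t := Finset.mem_insert_of_mem hx
      rw [← R.sup_parts] at hx2
      obtain ⟨c, hc, hxc⟩ := Finset.mem_sup.1 hx2
      simp only [id_eq] at hxc
      by_cases hcB : c = B
      · refine ⟨B.erase a, Finset.mem_insert_self _ _, ?_⟩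
        simp only [id_eq]
        rw [Finset.mem_erase]
        exact ⟨fun hxa => ha (hxa ▸ hx), hcB ▸ hxc⟩
      · exact ⟨c, Finset.mem_insert_of_mem (Finset.mem_erase.2 ⟨hcB, hc⟩), hxc⟩
  bot_notMem := by
    rw [Finset.mem_insert]
    rintro (h | h)
    · rcases (Finset.erase_eq_empty_iff B a).1 h.symm with h2 | h2
      · exact R.bot_notMem (by rw [Finset.bot_eq_empty]; exact h2 ▸ hB)
      · exact hBne h2
    · exact R.bot_notMem (Finset.mem_of_mem_erase h)

lemma shrinkB_parts (R : Finpartition (insert a t)) (ha : a ∉ t) {B : Finset α}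
    (hB : B ∈ R.parts) (haB : a ∈ B) (hBne : B ≠ {a}) :
    (shrinkB R ha hB haB hBne).parts = insert (B.erase a) (R.parts.erase B) := rfl

end step
end BellAux

namespace BellAux2
open Finset BellAux
open scoped Classical

variable {α : Type*} [DecidableEq α]

noncomputable def stirF (s : Finset α) (k : ℕ) : ℕ :=
  (Finset.univ.filter (fun P : Finpartition s => P.parts.card = k)).card

lemma part_eq {s : Finset α} (R : Finpartition s) {x : α} {c : Finset α} (hx : x ∈ s)
    (hc : c ∈ R.parts) (hxc : x ∈ c) : R.part x = c :=
  R.eq_of_mem_parts (R.part_mem.2 hx) hc (R.mem_part hx) hxc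

section step
variable {a : α} {t : Finset α}

lemma singleton_not_mem_parts (P : Finpartition t) (ha : a ∉ t) : {a} ∉ P.parts :=
  fun h => ha (P.le h (Finset.mem_singleton_self a))

lemma not_mem_parts_of_insert (P : Finpartition t) (ha : a ∉ t) (b : Finset α) :
    insert a b ∉ P.parts :=
  fun h => ha (P.le h (Finset.mem_insert_self a b))

lemma stir_insert (ha : a ∉ t) (k : ℕ) :
    stirF (insert a t) (k + 1) = stirF t k + (k + 1) * stirF t (k + 1) := by
  classical
  have hsplit := Finset.card_filter_add_card_filter_not
    (s := Finset.univ.filter (fun R : Finpartition (insert a t) => R.parts.card = k + 1))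
    (p := fun R => {a} ∈ R.parts)
  -- part (i): singleton case
  have hcard1 : ((Finset.univ.filter (fun R : Finpartition (insert a t) =>
      R.parts.card = k + 1)).filter (fun R => {a} ∈ R.parts)).card = stirF t k := by
    refine Finset.card_bij' (i := fun R hR => eraseS R ha (Finset.mem_filter.1 hR).2)
      (j := fun P _ => addS P ha) ?_ ?_ ?_ ?_
    · intro R hR
      obtain ⟨hR1, hR2⟩ := Finset.mem_filter.1 hR
      obtain ⟨-, hR3⟩ := Finset.mem_filter.1 hR1
      rw [Finset.mem_filter]
      refine ⟨Finset.mem_univ _, ?_⟩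
      rw [eraseS_parts, Finset.card_erase_of_mem hR2, hR3]
      omega
    · intro P hP
      obtain ⟨-, hP2⟩ := Finset.mem_filter.1 hP
      rw [Finset.mem_filter, Finset.mem_filter]
      refine ⟨⟨Finset.mem_univ _, ?_⟩, ?_⟩
      · rw [addS_parts, Finset.card_insert_of_notMem (singleton_not_mem_parts P ha), hP2]
      · rw [addS_parts]
        exact Finset.mem_insert_self _ _
    · intro R hR
      apply Finpartition.ext
      rw [addS_parts, eraseS_parts, Finset.insert_erase (Finset.mem_filter.1 hR).2]
    · intro P hP
      apply Finpartition.ext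
      rw [eraseS_parts, addS_parts, Finset.erase_insert (singleton_not_mem_parts P ha)]
  -- part (ii): non-singleton case
  have hamem : a ∈ insert a t := Finset.mem_insert_self a t
  have hcard2 : ((Finset.univ.filter (fun R : Finpartition (insert a t) =>
      R.parts.card = k + 1)).filter (fun R => ¬ {a} ∈ R.parts)).card =
      ((Finset.univ ×ˢ t.powerset).filter
        (fun x : Finpartition t × Finset α =>
          x.1.parts.card = k + 1 ∧ x.2 ∈ x.1.parts)).card := by
    have hBne : ∀ (R : Finpartition (insert a t)), {a} ∉ R.parts → R.part a ≠ {a} :=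
      fun R h heq => h (heq ▸ R.part_mem.2 hamem)
    have hBnonempty : ∀ (R : Finpartition (insert a t)), {a} ∉ R.parts →
        (R.part a).erase a ≠ ∅ := by
      intro R h hemp
      rcases (Finset.erase_eq_empty_iff _ _).1 hemp with h2 | h2
      · exact R.bot_notMem (by rw [Finset.bot_eq_empty]; exact h2 ▸ R.part_mem.2 hamem)
      · exact hBne R h h2
    have hBnotmem : ∀ (R : Finpartition (insert a t)), {a} ∉ R.parts →
        (R.part a).erase a ∉ R.parts.erase (R.part a) := by
      intro R h hmem
      obtain ⟨x, hx⟩ := Finset.nonempty_iff_ne_empty.2 (hBnonempty R h)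
      obtain ⟨hxa, hxB⟩ := Finset.mem_erase.1 hx
      have := R.eq_of_mem_parts (Finset.mem_of_mem_erase hmem) (R.part_mem.2 hamem) hx hxB
      have hne : (R.part a).erase a ≠ R.part a := by
        intro heq
        have hmm : a ∈ (R.part a).erase a := by rw [heq]; exact R.mem_part hamem
        exact (Finset.mem_erase.1 hmm).1 rfl
      exact hne this
    refine Finset.card_bij'
      (i := fun R hR => (shrinkB R ha (R.part_mem.2 hamem) (R.mem_part hamem)
        (hBne R (Finset.mem_filter.1 hR).2), (R.part a).erase a))
      (j := fun x hx => addB x.1 ha x.2 (Finset.mem_filter.1 hx).2.2) ?hi ?hj ?li ?ri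
    case hi =>
      intro R hR
      obtain ⟨hR1, hR2⟩ := Finset.mem_filter.1 hR
      obtain ⟨-, hR3⟩ := Finset.mem_filter.1 hR1
      rw [Finset.mem_filter]
      refine ⟨Finset.mem_product.2 ⟨Finset.mem_univ _, ?_⟩, ?_, ?_⟩
      · rw [Finset.mem_powerset]
        intro x hx
        obtain ⟨hxa, hxB⟩ := Finset.mem_erase.1 hx
        rcases Finset.mem_insert.1 (R.le (R.part_mem.2 hamem) hxB) with h | h
        · exact absurd h hxa
        · exact h
      · rw [shrinkB_parts, Finset.card_insert_of_notMem (hBnotmem R hR2),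
          Finset.card_erase_of_mem (R.part_mem.2 hamem), hR3]
        omega
      · rw [shrinkB_parts]
        exact Finset.mem_insert_self _ _
    case hj =>
      intro x hx
      obtain ⟨hx1, hx2, hx3⟩ := Finset.mem_filter.1 hx
      have hbt : x.2 ⊆ t := x.1.le hx3
      have habx : a ∉ x.2 := fun h => ha (hbt h)
      rw [Finset.mem_filter, Finset.mem_filter]
      refine ⟨⟨Finset.mem_univ _, ?_⟩, ?_⟩
      · rw [addB_parts, Finset.card_insert_of_notMem, Finset.card_erase_of_mem hx3, hx2]
        · omega
        · intro hmem
          exact not_mem_parts_of_insert x.1 ha x.2 (Finset.mem_of_mem_erase hmem)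
      · rw [addB_parts, Finset.mem_insert]
        rintro (h | h)
        · have : x.2 = ∅ := by
            rw [Finset.eq_empty_iff_forall_notMem]
            intro y hy
            have hy2 : y ∈ ({a} : Finset α) := h ▸ Finset.mem_insert_of_mem hy
            rw [Finset.mem_singleton] at hy2
            exact habx (hy2 ▸ hy)
          exact x.1.bot_notMem (by rw [Finset.bot_eq_empty]; exact this ▸ hx3)
        · exact singleton_not_mem_parts x.1 ha (Finset.mem_of_mem_erase h)
    case li =>
      intro R hR
      obtain ⟨hR1, hR2⟩ := Finset.mem_filter.1 hR
      have hBa : insert a ((R.part a).erase a) = R.part a :=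
        Finset.insert_erase (R.mem_part hamem)
      apply Finpartition.ext
      show (addB (shrinkB R ha (R.part_mem.2 hamem) (R.mem_part hamem) (hBne R hR2)) ha
          ((R.part a).erase a) (by rw [shrinkB_parts]; exact Finset.mem_insert_self _ _)).parts
        = R.parts
      rw [addB_parts, shrinkB_parts, Finset.erase_insert (hBnotmem R hR2), hBa,
        Finset.insert_erase (R.part_mem.2 hamem)]
    case ri =>
      intro x hx
      obtain ⟨hx1, hx2, hx3⟩ := Finset.mem_filter.1 hx
      have hbt : x.2 ⊆ t := x.1.le hx3
      have habx : a ∉ x.2 := fun h => ha (hbt h)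
      have hpart : (addB x.1 ha x.2 hx3).part a = insert a x.2 := by
        apply part_eq _ hamem _ (Finset.mem_insert_self a x.2)
        rw [addB_parts]
        exact Finset.mem_insert_self _ _
      have hABne : insert a x.2 ∉ x.1.parts.erase x.2 :=
        fun hmem => not_mem_parts_of_insert x.1 ha x.2 (Finset.mem_of_mem_erase hmem)
      apply Prod.ext
      · show (shrinkB (addB x.1 ha x.2 hx3) ha
            ((addB x.1 ha x.2 hx3).part_mem.2 hamem)
            ((addB x.1 ha x.2 hx3).mem_part hamem)
            (hBne _ (by
              rw [addB_parts, Finset.mem_insert]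
              rintro (h | h)
              · have hx2e : x.2 = ∅ := by
                  rw [Finset.eq_empty_iff_forall_notMem]
                  intro y hy
                  have hy2 : y ∈ ({a} : Finset α) := h ▸ Finset.mem_insert_of_mem hy
                  rw [Finset.mem_singleton] at hy2
                  exact habx (hy2 ▸ hy)
                exact x.1.bot_notMem (by rw [Finset.bot_eq_empty]; exact hx2e ▸ hx3)
              · exact singleton_not_mem_parts x.1 ha (Finset.mem_of_mem_erase h)))) = x.1
        apply Finpartition.ext
        rw [shrinkB_parts, addB_parts]
        simp_rw [hpart]
        rw [Finset.erase_insert habx, Finset.erase_insert hABne, Finset.insert_erase hx3]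
      · show ((addB x.1 ha x.2 hx3).part a).erase a = x.2
        rw [hpart, Finset.erase_insert habx]
  -- part (iii): counting the marked pairs
  have hcard3 : ((Finset.univ ×ˢ t.powerset).filter
      (fun x : Finpartition t × Finset α =>
        x.1.parts.card = k + 1 ∧ x.2 ∈ x.1.parts)).card = (k + 1) * stirF t (k + 1) := by
    rw [Finset.card_filter, Finset.sum_product]
    have hinner : ∀ P : Finpartition t,
        (∑ b ∈ t.powerset, if P.parts.card = k + 1 ∧ b ∈ P.parts then (1:ℕ) else 0) =
        if P.parts.card = k + 1 then k + 1 else 0 := by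
      intro P
      by_cases hP : P.parts.card = k + 1
      · rw [if_pos hP]
        have h1 : ∀ b, (P.parts.card = k + 1 ∧ b ∈ P.parts) = (b ∈ P.parts) := by
          intro b
          simp [hP]
        simp_rw [h1]
        rw [← Finset.card_filter]
        have h2 : t.powerset.filter (fun b => b ∈ P.parts) = P.parts := by
          ext b
          rw [Finset.mem_filter, Finset.mem_powerset]
          exact ⟨fun h => h.2, fun h => ⟨P.le h, h⟩⟩
        rw [h2, hP]
      · rw [if_neg hP]
        apply Finset.sum_eq_zero
        intro b _
        rw [if_neg (fun hc => hP hc.1)]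
    rw [Finset.sum_congr rfl (fun P _ => hinner P)]
    rw [stirF, Finset.card_filter, Finset.mul_sum]
    apply Finset.sum_congr rfl
    intro P _
    split <;> simp
  rw [stirF, ← hsplit, hcard1, hcard2, hcard3]

lemma parts_card_pos (R : Finpartition (insert a t)) : R.parts.card ≠ 0 := by
  intro h
  rw [Finset.card_eq_zero] at h
  have := R.sup_parts
  rw [h, Finset.sup_empty] at this
  exact Finset.insert_ne_empty a t (by rw [← this]; rfl)

end step

lemma stirF_eq (s : Finset α) : ∀ k, stirF s k = stirling2 s.card k := by
  induction s using Finset.induction_on with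
  | empty =>
    intro k
    have huniv : ∀ P : Finpartition (∅ : Finset α), P.parts.card = 0 := by
      intro P
      rw [parts_empty P, Finset.card_empty]
    have hone : Fintype.card (Finpartition (∅ : Finset α)) = 1 := by
      have : (∅ : Finset α) = (⊥ : Finset α) := rfl
      rw [this]
      exact Fintype.card_unique
    cases k with
    | zero =>
      rw [stirF, Finset.card_empty]
      have : Finset.univ.filter (fun P : Finpartition (∅ : Finset α) => P.parts.card = 0)
          = Finset.univ := by
        apply Finset.filter_true_of_mem
        intro P _
        exact huniv P
      rw [this]
      rw [show (Finset.univ : Finset (Finpartition (∅ : Finset α))).card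
        = Fintype.card (Finpartition (∅ : Finset α)) from rfl, hone]
      rfl
    | succ k =>
      rw [stirF, Finset.card_empty]
      have : Finset.univ.filter
          (fun P : Finpartition (∅ : Finset α) => P.parts.card = k + 1) = ∅ := by
        apply Finset.filter_false_of_mem
        intro P _
        rw [huniv P]
        omega
      rw [this, Finset.card_empty]
      rfl
  | @insert a t ha ih =>
    intro k
    rw [Finset.card_insert_of_notMem ha]
    cases k with
    | zero =>
      have : Finset.univ.filter
          (fun R : Finpartition (insert a t) => R.parts.card = 0) = ∅ := by
        apply Finset.filter_false_of_mem
        intro R _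
        exact parts_card_pos R
      rw [stirF, this, Finset.card_empty]
      rfl
    | succ k =>
      rw [stir_insert ha k, ih k, ih (k + 1)]
      rw [show stirling2 (t.card + 1) (k + 1)
        = (k + 1) * stirling2 t.card (k + 1) + stirling2 t.card k from rfl]
      omega

lemma bell_sum (m : ℕ) : Nat.card (Finpartition (Finset.univ : Finset (Fin m)))
    = ∑ k ∈ Finset.range (m + 1), stirling2 m k := by
  rw [Nat.card_eq_fintype_card]
  have h1 : Fintype.card (Finpartition (Finset.univ : Finset (Fin m)))
      = (Finset.univ : Finset (Finpartition (Finset.univ : Finset (Fin m)))).card := rfl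
  rw [h1, Finset.card_eq_sum_card_fiberwise
    (f := fun P : Finpartition (Finset.univ : Finset (Fin m)) => P.parts.card)
    (t := Finset.range (m + 1)) (fun P _ => by
      rw [Finset.mem_coe, Finset.mem_range]
      have h2 := P.card_parts_le_card
      rw [Finset.card_univ, Fintype.card_fin] at h2
      show P.parts.card < m + 1
      omega)]
  apply Finset.sum_congr rfl
  intro k _
  have := stirF_eq (Finset.univ : Finset (Fin m)) k
  rw [stirF] at this
  rw [this, Finset.card_univ, Fintype.card_fin]

end BellAux2

open scoped Classical in
theorem flattened_rlm_popularity (n : ℕ) (hn : 1 ≤ n) :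
    (∑ π ∈ Finset.univ.filter (fun π : Equiv.Perm (Fin n) => Flattened π), rlmCount π =
      ∑ k ∈ Finset.Icc 1 n, k * stirling2 (n - 1) (k - 1)) ∧
    (∑ k ∈ Finset.Icc 1 n, k * stirling2 (n - 1) (k - 1) =
      bell (n - 1) + ∑ k ∈ Finset.range n, k * stirling2 (n - 1) k) := by
  constructor
  · exact FlatAux8.part1 n hn
  · have hre : ∑ k ∈ Finset.Icc 1 n, k * stirling2 (n - 1) (k - 1)
        = ∑ j ∈ Finset.range n, (j + 1) * stirling2 (n - 1) j := by
      apply Finset.sum_nbij' (i := fun k => k - 1) (j := fun j => j + 1)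
      · intro k hk
        rw [Finset.mem_Icc] at hk
        rw [Finset.mem_range]
        omega
      · intro j hj
        rw [Finset.mem_range] at hj
        rw [Finset.mem_Icc]
        omega
      · intro k hk
        rw [Finset.mem_Icc] at hk
        omega
      · intro j _
        omega
      · intro k hk
        rw [Finset.mem_Icc] at hk
        have h1 : k - 1 + 1 = k := by omega
        rw [h1]
    have hsplit : ∑ j ∈ Finset.range n, (j + 1) * stirling2 (n - 1) j
        = (∑ j ∈ Finset.range n, stirling2 (n - 1) j)
          + ∑ j ∈ Finset.range n, j * stirling2 (n - 1) j := by
      rw [← Finset.sum_add_distrib]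
      apply Finset.sum_congr rfl
      intro j _
      ring
    have hbell : bell (n - 1) = ∑ j ∈ Finset.range n, stirling2 (n - 1) j := by
      rw [bell, BellAux2.bell_sum]
      have h1 : n - 1 + 1 = n := by omega
      rw [h1]
    rw [hre, hsplit, hbell]
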